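/- Let K₁ and K₂ be nonempty closed convex cones in a real Hilbert space H. If ⟨P_{K₁} x, P_{K₂} x⟩ = 0 for every x ∈ H, then K₁ + K₂ is closed and P_{K₁} + P_{K₂} = P_{K₁+K₂}. -/

import Mathlib

open RealInnerProductSpace Pointwise

variable {H : Type*} [NormedAddCommGroup H] [InnerProductSpace ℝ H] [CompleteSpace H]

/-- `P` is the metric projection (nearest-point map) onto `C`. -/
def IsProjOn (C : Set H) (P : H → H) : Prop :=
  ∀ x, P x ∈ C ∧ ∀ y ∈ C, ‖x - P x‖ ≤ ‖x - y‖

theorem proj_self {C : Set H} {P : H → H} (hP : IsProjOn C P) {y : H} (hy : y ∈ C) :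
    P y = y := by
  have h := (hP y).2 y hy
  simp only [sub_self, norm_zero] at h
  have h0 : ‖y - P y‖ = 0 := le_antisymm h (norm_nonneg _)
  rw [norm_sub_eq_zero_iff] at h0
  exact h0.symm

theorem proj_vi {C : Set H} (hC : Convex ℝ C) {P : H → H} (hP : IsProjOn C P)
    (x : H) {y : H} (hy : y ∈ C) : ⟪x - P x, y - P x⟫ ≤ 0 := by
  by_contra h
  push_neg at h
  have hne : y - P x ≠ 0 := by
    intro h0
    rw [h0, inner_zero_right] at h
    exact lt_irrefl _ h
  have hpos : (0:ℝ) < ‖y - P x‖ ^ 2 := by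
    have := norm_pos_iff.mpr hne
    positivity
  set c := ⟪x - P x, y - P x⟫ with hc
  set t := min 1 (c / ‖y - P x‖ ^ 2) with ht
  have ht0 : 0 < t := lt_min one_pos (div_pos h hpos)
  have ht1 : t ≤ 1 := min_le_left _ _
  have hz : (1 - t) • P x + t • y ∈ C :=
    hC (hP x).1 hy (by linarith) (le_of_lt ht0) (by ring)
  have hd := (hP x).2 _ hz
  have he : x - ((1 - t) • P x + t • y) = (x - P x) - t • (y - P x) := by
    rw [smul_sub]; module
  rw [he] at hd
  have hsq : ‖x - P x‖ ^ 2 ≤ ‖x - P x - t • (y - P x)‖ ^ 2 :=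
    pow_le_pow_left₀ (norm_nonneg _) hd 2
  have expand : ‖x - P x - t • (y - P x)‖ ^ 2
      = ‖x - P x‖ ^ 2 - 2 * (t * c) + t ^ 2 * ‖y - P x‖ ^ 2 := by
    rw [norm_sub_sq_real, real_inner_smul_right, norm_smul, mul_pow]
    simp only [Real.norm_eq_abs, sq_abs]
    rw [← hc]
  rw [expand] at hsq
  have htle : t * ‖y - P x‖ ^ 2 ≤ c := by
    have : t ≤ c / ‖y - P x‖ ^ 2 := min_le_right _ _
    calc t * ‖y - P x‖ ^ 2 ≤ (c / ‖y - P x‖ ^ 2) * ‖y - P x‖ ^ 2 := by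
          exact mul_le_mul_of_nonneg_right this (le_of_lt hpos)
      _ = c := div_mul_cancel₀ _ (ne_of_gt hpos)
  nlinarith

theorem vi_proj {C : Set H} (hC : Convex ℝ C) {P : H → H} (hP : IsProjOn C P)
    {x z : H} (hz : z ∈ C) (hvi : ∀ y ∈ C, ⟪x - z, y - z⟫ ≤ 0) : P x = z := by
  have h1 := proj_vi hC hP x hz
  have h2 := hvi (P x) (hP x).1
  have h2' : 0 ≤ ⟪x - z, z - P x⟫ := by
    have e : ⟪x - z, z - P x⟫ = -⟪x - z, P x - z⟫ := by
      rw [show z - P x = -(P x - z) by abel, inner_neg_right]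
    linarith
  have key : ⟪z - P x, z - P x⟫ ≤ 0 := by
    have e : ⟪z - P x, z - P x⟫ = ⟪x - P x, z - P x⟫ - ⟪x - z, z - P x⟫ := by
      rw [← inner_sub_left]
      congr 1
      abel
    linarith
  have : z - P x = 0 := by
    have := real_inner_self_nonpos.mp key
    exact this
  rw [sub_eq_zero] at this
  exact this.symm

theorem cone_zero_mem {K : Set H} (hne : K.Nonempty)
    (hcone : ∀ c ∈ K, ∀ t : ℝ, 0 ≤ t → t • c ∈ K) : (0:H) ∈ K := by
  obtain ⟨c, hc⟩ := hne
  simpa using hcone c hc 0 le_rfl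

theorem proj_orth {K : Set H} (hne : K.Nonempty) (hcv : Convex ℝ K)
    (hcone : ∀ c ∈ K, ∀ t : ℝ, 0 ≤ t → t • c ∈ K)
    {P : H → H} (hP : IsProjOn K P) (x : H) : ⟪x - P x, P x⟫ = 0 := by
  have h1 := proj_vi hcv hP x (hcone _ (hP x).1 2 (by norm_num))
  have h2 := proj_vi hcv hP x (cone_zero_mem hne hcone)
  have e1 : (2:ℝ) • P x - P x = P x := by module
  rw [e1] at h1
  rw [zero_sub, inner_neg_right] at h2
  linarith

theorem proj_cone_le {K : Set H} (hne : K.Nonempty) (hcv : Convex ℝ K)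
    (hcone : ∀ c ∈ K, ∀ t : ℝ, 0 ≤ t → t • c ∈ K)
    {P : H → H} (hP : IsProjOn K P) (x : H) {y : H} (hy : y ∈ K) :
    ⟪x - P x, y⟫ ≤ 0 := by
  have h1 := proj_vi hcv hP x hy
  have h2 := proj_orth hne hcv hcone hP x
  have e : ⟪x - P x, y⟫ = ⟪x - P x, y - P x⟫ + ⟪x - P x, P x⟫ := by
    rw [inner_sub_right]; ring
  rw [e]; linarith

theorem proj_nonexp {C : Set H} (hC : Convex ℝ C) {P : H → H} (hP : IsProjOn C P)
    (x y : H) : ‖P x - P y‖ ≤ ‖x - y‖ := by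
  have h1 := proj_vi hC hP x (hP y).1
  have h2 := proj_vi hC hP y (hP x).1
  have h1' : 0 ≤ ⟪x - P x, P x - P y⟫ := by
    rw [show P x - P y = -(P y - P x) by abel, inner_neg_right]
    linarith
  have e' : ⟪x - y, P x - P y⟫ - ⟪P x - P y, P x - P y⟫
      = ⟪x - P x, P x - P y⟫ - ⟪y - P y, P x - P y⟫ := by
    rw [← inner_sub_left, ← inner_sub_left]
    congr 1
    abel
  have key : ‖P x - P y‖ ^ 2 ≤ ⟪x - y, P x - P y⟫ := by
    rw [← real_inner_self_eq_norm_sq]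
    linarith
  have h3 : ⟪x - y, P x - P y⟫ ≤ ‖x - y‖ * ‖P x - P y‖ := real_inner_le_norm _ _
  rcases eq_or_lt_of_le (norm_nonneg (P x - P y)) with h0 | h0
  · rw [← h0]; exact norm_nonneg _
  · nlinarith

theorem shift_eq {K₁ K₂ : Set H}
    (h₁ne : K₁.Nonempty) (h₁cv : Convex ℝ K₁)
    (h₁cone : ∀ c ∈ K₁, ∀ t : ℝ, 0 ≤ t → t • c ∈ K₁)
    (h₂ne : K₂.Nonempty) (h₂cv : Convex ℝ K₂)
    (h₂cone : ∀ c ∈ K₂, ∀ t : ℝ, 0 ≤ t → t • c ∈ K₂)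
    {P₁ P₂ : H → H} (hP₁ : IsProjOn K₁ P₁) (hP₂ : IsProjOn K₂ P₂)
    (horth : ∀ x : H, ⟪P₁ x, P₂ x⟫ = 0) (x : H) :
    P₂ (x - P₁ x) = P₂ x := by
  -- mutual polarity
  have polar : ∀ k₁ ∈ K₁, ∀ k₂ ∈ K₂, ⟪k₂, k₁⟫ ≤ 0 := by
    intro k₁ hk₁ k₂ hk₂
    have hself : P₂ k₂ = k₂ := proj_self hP₂ hk₂
    have h0 : ⟪P₁ k₂, k₂⟫ = 0 := by have := horth k₂; rwa [hself] at this
    have hle : ‖k₂ - P₁ k₂‖ ≤ ‖k₂‖ := by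
      simpa using (hP₁ k₂).2 0 (cone_zero_mem h₁ne h₁cone)
    have hP10 : P₁ k₂ = 0 := by
      have hsq : ‖k₂ - P₁ k₂‖ ^ 2 ≤ ‖k₂‖ ^ 2 := pow_le_pow_left₀ (norm_nonneg _) hle 2
      rw [norm_sub_sq_real] at hsq
      have hcomm : ⟪k₂, P₁ k₂⟫ = 0 := by rw [real_inner_comm]; exact h0
      have hnn : ‖P₁ k₂‖ = 0 := by nlinarith [norm_nonneg (P₁ k₂)]
      exact norm_eq_zero.mp hnn
    have h1 := proj_cone_le h₁ne h₁cv h₁cone hP₁ k₂ hk₁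
    rwa [hP10, sub_zero] at h1
  -- projection along the segment x - t • P₁ x
  have scale : ∀ t : ℝ, 0 ≤ t → t ≤ 1 → P₁ (x - t • P₁ x) = (1 - t) • P₁ x := by
    intro t ht0 ht1
    apply vi_proj h₁cv hP₁ (h₁cone _ (hP₁ x).1 (1 - t) (by linarith))
    intro y hy
    have e : x - t • P₁ x - (1 - t) • P₁ x = x - P₁ x := by module
    rw [e, inner_sub_right, real_inner_smul_right, proj_orth h₁ne h₁cv h₁cone hP₁ x,
      mul_zero, sub_zero]
    exact proj_cone_le h₁ne h₁cv h₁cone hP₁ x hy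
  -- orthogonality at the shifted point
  have horthw : ⟪P₁ x, P₂ (x - P₁ x)⟫ = 0 := by
    have hbound : ∀ t : ℝ, 0 ≤ t → t < 1 →
        |⟪P₁ x, P₂ (x - P₁ x)⟫| ≤ (1 - t) * (‖P₁ x‖ * ‖P₁ x‖) := by
      intro t ht0 ht1
      have hz : ⟪P₁ x, P₂ (x - t • P₁ x)⟫ = 0 := by
        have h := horth (x - t • P₁ x)
        rw [scale t ht0 (le_of_lt ht1), real_inner_smul_left] at h
        have h1t : (1:ℝ) - t ≠ 0 := ne_of_gt (by linarith)
        exact (mul_eq_zero.mp h).resolve_left h1t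
      have e : ⟪P₁ x, P₂ (x - P₁ x)⟫
          = ⟪P₁ x, P₂ (x - P₁ x) - P₂ (x - t • P₁ x)⟫ := by
        rw [inner_sub_right, hz, sub_zero]
      rw [e]
      calc |⟪P₁ x, P₂ (x - P₁ x) - P₂ (x - t • P₁ x)⟫|
          ≤ ‖P₁ x‖ * ‖P₂ (x - P₁ x) - P₂ (x - t • P₁ x)‖ := abs_real_inner_le_norm _ _
        _ ≤ ‖P₁ x‖ * ‖(x - P₁ x) - (x - t • P₁ x)‖ :=
            mul_le_mul_of_nonneg_left (proj_nonexp h₂cv hP₂ _ _) (norm_nonneg _)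
        _ = (1 - t) * (‖P₁ x‖ * ‖P₁ x‖) := by
            rw [show (x - P₁ x) - (x - t • P₁ x) = (t - 1) • P₁ x by module, norm_smul]
            rw [Real.norm_eq_abs, abs_of_nonpos (by linarith : t - (1:ℝ) ≤ 0)]
            ring
    by_contra hc
    have habs : 0 < |⟪P₁ x, P₂ (x - P₁ x)⟫| := abs_pos.mpr hc
    have hx0 : P₁ x ≠ 0 := by
      intro h0; exact hc (by rw [h0, inner_zero_left])
    have hn : 0 < ‖P₁ x‖ * ‖P₁ x‖ := by
      have := norm_pos_iff.mpr hx0; positivity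
    set c := |⟪P₁ x, P₂ (x - P₁ x)⟫| with hcdef
    set t := max 0 (1 - c / (2 * (‖P₁ x‖ * ‖P₁ x‖))) with htdef
    have hpos : 0 < c / (2 * (‖P₁ x‖ * ‖P₁ x‖)) := div_pos habs (by positivity)
    have ht0 : 0 ≤ t := le_max_left _ _
    have ht1 : t < 1 := max_lt one_pos (by linarith)
    have h1t : 1 - t ≤ c / (2 * (‖P₁ x‖ * ‖P₁ x‖)) := by
      have := le_max_right 0 (1 - c / (2 * (‖P₁ x‖ * ‖P₁ x‖)))
      rw [htdef]; linarith [this]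
    have hb := hbound t ht0 ht1
    have : c ≤ (c / (2 * (‖P₁ x‖ * ‖P₁ x‖))) * (‖P₁ x‖ * ‖P₁ x‖) := by
      calc c ≤ (1 - t) * (‖P₁ x‖ * ‖P₁ x‖) := hb
        _ ≤ (c / (2 * (‖P₁ x‖ * ‖P₁ x‖))) * (‖P₁ x‖ * ‖P₁ x‖) :=
            mul_le_mul_of_nonneg_right h1t (le_of_lt hn)
    have key : (c / (2 * (‖P₁ x‖ * ‖P₁ x‖))) * (‖P₁ x‖ * ‖P₁ x‖) = c / 2 := by
      have hne' : (‖P₁ x‖ * ‖P₁ x‖) ≠ 0 := ne_of_gt hn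
      field_simp
    rw [key] at this
    linarith
  -- conclude via uniqueness of the projection
  symm
  apply vi_proj h₂cv hP₂ (hP₂ (x - P₁ x)).1
  intro y hy
  have e : x - P₂ (x - P₁ x) = (x - P₁ x - P₂ (x - P₁ x)) + P₁ x := by abel
  rw [e, inner_add_left]
  have ha := proj_vi h₂cv hP₂ (x - P₁ x) hy
  have hb : ⟪P₁ x, y - P₂ (x - P₁ x)⟫ ≤ 0 := by
    rw [inner_sub_right, horthw, sub_zero, real_inner_comm]
    exact polar (P₁ x) (hP₁ x).1 y hy
  linarith

theorem stmt13 (K₁ K₂ : Set H)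
    (h₁ne : K₁.Nonempty) (h₁cl : IsClosed K₁) (h₁cv : Convex ℝ K₁)
    (h₁cone : ∀ c ∈ K₁, ∀ t : ℝ, 0 ≤ t → t • c ∈ K₁)
    (h₂ne : K₂.Nonempty) (h₂cl : IsClosed K₂) (h₂cv : Convex ℝ K₂)
    (h₂cone : ∀ c ∈ K₂, ∀ t : ℝ, 0 ≤ t → t • c ∈ K₂)
    (P₁ P₂ : H → H) (hP₁ : IsProjOn K₁ P₁) (hP₂ : IsProjOn K₂ P₂)
    (horth : ∀ x : H, ⟪P₁ x, P₂ x⟫ = 0) :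
    IsClosed (K₁ + K₂) ∧ IsProjOn (K₁ + K₂) (fun x => P₁ x + P₂ x) := by
  have horth' : ∀ x : H, ⟪P₂ x, P₁ x⟫ = 0 := fun x => by
    rw [real_inner_comm]; exact horth x
  have hshift21 : ∀ x, P₂ (x - P₁ x) = P₂ x :=
    shift_eq h₁ne h₁cv h₁cone h₂ne h₂cv h₂cone hP₁ hP₂ horth
  have hshift12 : ∀ x, P₁ (x - P₂ x) = P₁ x :=
    shift_eq h₂ne h₂cv h₂cone h₁ne h₁cv h₁cone hP₂ hP₁ horth'
  have hQmem : ∀ x : H, P₁ x + P₂ x ∈ K₁ + K₂ :=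
    fun x => Set.add_mem_add (hP₁ x).1 (hP₂ x).1
  have hu2 : ∀ x : H, ∀ y₂ ∈ K₂, ⟪x - P₁ x - P₂ x, y₂⟫ ≤ 0 := by
    intro x y₂ hy
    have h := proj_cone_le h₂ne h₂cv h₂cone hP₂ (x - P₁ x) hy
    rwa [hshift21] at h
  have hu1 : ∀ x : H, ∀ y₁ ∈ K₁, ⟪x - P₁ x - P₂ x, y₁⟫ ≤ 0 := by
    intro x y₁ hy
    have h := proj_cone_le h₁ne h₁cv h₁cone hP₁ (x - P₂ x) hy
    rw [hshift12] at h
    rwa [show x - P₂ x - P₁ x = x - P₁ x - P₂ x by abel] at h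
  have huQ : ∀ x : H, ⟪x - P₁ x - P₂ x, P₁ x + P₂ x⟫ = 0 := by
    intro x
    rw [inner_add_right]
    have e1 : ⟪x - P₁ x - P₂ x, P₁ x⟫ = 0 := by
      rw [show x - P₁ x - P₂ x = (x - P₁ x) - P₂ x by abel, inner_sub_left,
        proj_orth h₁ne h₁cv h₁cone hP₁ x, horth' x, sub_zero]
    have e2 : ⟪x - P₁ x - P₂ x, P₂ x⟫ = 0 := by
      rw [show x - P₁ x - P₂ x = (x - P₂ x) - P₁ x by abel, inner_sub_left,
        proj_orth h₂ne h₂cv h₂cone hP₂ x, horth x, sub_zero]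
    rw [e1, e2, add_zero]
  have hmain : IsProjOn (K₁ + K₂) (fun x => P₁ x + P₂ x) := by
    intro x
    refine ⟨hQmem x, ?_⟩
    intro y hy
    obtain ⟨y₁, hy₁, y₂, hy₂, rfl⟩ := hy
    have hd : ⟪x - P₁ x - P₂ x, (P₁ x + P₂ x) - (y₁ + y₂)⟫ ≥ 0 := by
      rw [inner_sub_right, huQ x, inner_add_right]
      have := hu1 x y₁ hy₁
      have := hu2 x y₂ hy₂
      linarith
    have e : x - (y₁ + y₂) = (x - (P₁ x + P₂ x)) + ((P₁ x + P₂ x) - (y₁ + y₂)) := by abel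
    have hsq : ‖x - (P₁ x + P₂ x)‖ ^ 2 ≤ ‖x - (y₁ + y₂)‖ ^ 2 := by
      rw [e, norm_add_sq_real]
      have h1 : ⟪x - (P₁ x + P₂ x), (P₁ x + P₂ x) - (y₁ + y₂)⟫ ≥ 0 := by
        rwa [show x - (P₁ x + P₂ x) = x - P₁ x - P₂ x by abel]
      nlinarith [sq_nonneg ‖(P₁ x + P₂ x) - (y₁ + y₂)‖]
    exact (pow_le_pow_iff_left₀ (norm_nonneg _) (norm_nonneg _) (by norm_num)).mp hsq
  refine ⟨?_, hmain⟩
  have hset : K₁ + K₂ = {x : H | P₁ x + P₂ x = x} := by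
    ext x
    constructor
    · intro hx
      have h := (hmain x).2 x hx
      simp only [sub_self, norm_zero] at h
      have h0 : ‖x - (P₁ x + P₂ x)‖ = 0 := le_antisymm h (norm_nonneg _)
      rw [norm_sub_eq_zero_iff] at h0
      exact h0.symm
    · intro hx
      rw [Set.mem_setOf_eq] at hx
      rw [← hx]
      exact hQmem x
  rw [hset]
  have hc1 : Continuous P₁ :=
    (LipschitzWith.of_dist_le' (K := 1) fun a b => by
      simpa [dist_eq_norm] using proj_nonexp h₁cv hP₁ a b).continuous
  have hc2 : Continuous P₂ :=
    (LipschitzWith.of_dist_le' (K := 1) fun a b => by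
      simpa [dist_eq_norm] using proj_nonexp h₂cv hP₂ a b).continuous
  exact isClosed_eq (hc1.add hc2) continuous_id
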